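/- Let G be an additive subgroup of ℂ which is a free abelian group of rank ν ≥ 1. Then every 1/2-derivation of the deformed generalized Heisenberg–Virasoro algebra g(G,−2) is a scalar multiple of the identity map. -/

import Mathlib

set_option linter.unusedSectionVars false
set_option maxHeartbeats 1000000
open scoped Classical



open scoped Classical

/-- Index set for the basis of the deformed generalized Heisenberg–Virasoro
algebra `g(G, -2)`, where `G` is free abelian of rank `ν` with a fixed
`ℤ`-basis `ε_1, …, ε_ν` (indexed here by `Fin ν`).  The central elements
`C_LI^(i)` for `2 ≤ i ≤ ν` are indexed by the elements of `Fin ν` of positive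
value. -/
inductive DGHV2Idx (G : AddSubgroup ℂ) (ν : ℕ) : Type
  | L : G → DGHV2Idx G ν
  | I : G → DGHV2Idx G ν
  | CL : DGHV2Idx G ν
  | CLI : {i : Fin ν // 0 < i.val} → DGHV2Idx G ν


section Aux
variable {G : AddSubgroup ℂ} {ν : ℕ} {Lg : Type*} [LieRing Lg] [LieAlgebra ℂ Lg]
variable (bas : Module.Basis (DGHV2Idx G ν) ℂ Lg)

theorem DGHV2.brExt (w : Lg) (M : DGHV2Idx G ν) (g : Lg →ₗ[ℂ] ℂ)
    (h : ∀ J, bas.repr ⁅bas J, w⁆ M = g (bas J)) (z : Lg) :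
    bas.repr ⁅z, w⁆ M = g z := by
  have : ({ toFun := fun z => bas.repr ⁅z, w⁆ M,
            map_add' := by intro x y; simp [add_lie],
            map_smul' := by intro c x; simp [smul_lie] } : Lg →ₗ[ℂ] ℂ) = g :=
    Module.Basis.ext bas h
  exact DFunLike.congr_fun this z

variable (ε : Module.Basis (Fin ν) ℤ G)
variable
    (hLL : ∀ a b : G, ⁅bas (DGHV2Idx.L a), bas (DGHV2Idx.L b)⁆ =
      ((b : ℂ) - (a : ℂ)) • bas (DGHV2Idx.L (a + b)) +
        (if a + b = 0 then ((a : ℂ) ^ 3 - (a : ℂ)) / 12 else 0) •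
          bas DGHV2Idx.CL)
    (hLI : ∀ a b : G, ⁅bas (DGHV2Idx.L a), bas (DGHV2Idx.I b)⁆ =
      ((b : ℂ) + 2 * (a : ℂ)) • bas (DGHV2Idx.I (a + b)) +
        (if a + b = 0 then
          ∑ i : {i : Fin ν // 0 < i.val},
            ((ε.repr a i.1 : ℤ) : ℂ) • bas (DGHV2Idx.CLI i)
        else 0))
    (hII : ∀ a b : G, ⁅bas (DGHV2Idx.I a), bas (DGHV2Idx.I b)⁆ = 0)
    (hCL : ∀ x : Lg, ⁅bas DGHV2Idx.CL, x⁆ = 0)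
    (hCLI : ∀ (i : {i : Fin ν // 0 < i.val}) (x : Lg),
      ⁅bas (DGHV2Idx.CLI i), x⁆ = 0)

include hLL hLI hII hCL hCLI in
theorem DGHV2.R1 (b v : G) (z : Lg) :
    bas.repr ⁅z, bas (DGHV2Idx.L b)⁆ (DGHV2Idx.L v)
      = (2*(b:ℂ) - v) * bas.repr z (DGHV2Idx.L (v-b)) := by
  refine DGHV2.brExt bas _ _ ((2*(b:ℂ)-(v:ℂ)) • bas.coord (DGHV2Idx.L (v-b))) (fun J => ?_) z
  cases J with
  | L a =>
      rw [hLL]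
      simp only [map_add, map_smul, Module.Basis.repr_self, Module.Basis.coord_apply, Finsupp.add_apply,
        Finsupp.smul_apply, Finsupp.single_apply, LinearMap.smul_apply, smul_eq_mul,
        DGHV2Idx.L.injEq, eq_sub_iff_add_eq, reduceCtorEq, if_false, mul_zero, add_zero]
      split_ifs with h
      · obtain rfl := h.symm; push_cast; ring
      · ring
  | I a =>
      rw [← lie_skew, hLI b a]
      split_ifs with h <;> simp [Finsupp.single_apply, Module.Basis.coord_apply]
  | CL =>
      rw [hCL]
      simp [Finsupp.single_apply, Module.Basis.coord_apply]
  | CLI i =>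
      rw [hCLI]
      simp [Finsupp.single_apply, Module.Basis.coord_apply]


include hLL hLI hII hCL hCLI in
theorem DGHV2.R2 (b v : G) (z : Lg) :
    bas.repr ⁅z, bas (DGHV2Idx.L b)⁆ (DGHV2Idx.I v)
      = -((v:ℂ)+b) * bas.repr z (DGHV2Idx.I (v-b)) := by
  refine DGHV2.brExt bas _ _ ((-((v:ℂ)+b)) • bas.coord (DGHV2Idx.I (v-b))) (fun J => ?_) z
  cases J with
  | L a =>
      rw [hLL]
      split_ifs with hc <;> simp [Finsupp.single_apply, Module.Basis.coord_apply]
  | I a =>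
      rw [← lie_skew, hLI b a]
      split_ifs with hc
      · simp only [map_add, map_neg, map_smul, map_sum, Module.Basis.repr_self, Finsupp.add_apply,
          Finsupp.neg_apply, Finsupp.smul_apply, Finsupp.finset_sum_apply,
          Finsupp.single_apply, LinearMap.smul_apply, Module.Basis.coord_apply, smul_eq_mul,
          DGHV2Idx.I.injEq, eq_sub_iff_add_eq, reduceCtorEq, if_false, mul_zero, add_zero,
          Finset.sum_const_zero]
        rw [add_comm b a]
        split_ifs with h
        · obtain rfl := h.symm; push_cast; ring
        · ring
      · simp only [map_add, map_neg, map_smul, Module.Basis.repr_self, Finsupp.add_apply,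
          Finsupp.neg_apply, Finsupp.smul_apply, Finsupp.single_apply, LinearMap.smul_apply,
          Module.Basis.coord_apply, smul_eq_mul, DGHV2Idx.I.injEq, eq_sub_iff_add_eq, map_zero,
          Finsupp.zero_apply, add_zero]
        rw [add_comm b a]
        split_ifs with h
        · obtain rfl := h.symm; push_cast; ring
        · ring
  | CL =>
      rw [hCL]
      simp [Finsupp.single_apply, Module.Basis.coord_apply]
  | CLI i =>
      rw [hCLI]
      simp [Finsupp.single_apply, Module.Basis.coord_apply]

include hLL hLI hII hCL hCLI in
theorem DGHV2.R3 (b : G) (z : Lg) :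
    bas.repr ⁅z, bas (DGHV2Idx.L b)⁆ DGHV2Idx.CL
      = (((b:ℂ) - (b:ℂ)^3)/12) * bas.repr z (DGHV2Idx.L (-b)) := by
  refine DGHV2.brExt bas _ _ ((((b:ℂ) - (b:ℂ)^3)/12) • bas.coord (DGHV2Idx.L (-b))) (fun J => ?_) z
  cases J with
  | L a =>
      rw [hLL]
      simp only [map_add, map_smul, Module.Basis.repr_self, Finsupp.add_apply, Finsupp.smul_apply,
        Finsupp.single_apply, LinearMap.smul_apply, Module.Basis.coord_apply, smul_eq_mul,
        DGHV2Idx.L.injEq, eq_neg_iff_add_eq_zero, reduceCtorEq, if_false, mul_zero, zero_add,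
        if_true, mul_one]
      split_ifs with h
      · have : a = -b := eq_neg_of_add_eq_zero_left h
        subst this; push_cast; ring
      · ring
  | I a =>
      rw [← lie_skew, hLI b a]
      split_ifs with hc <;>
        simp [Finsupp.single_apply, Module.Basis.coord_apply]
  | CL =>
      rw [hCL]
      simp [Finsupp.single_apply, Module.Basis.coord_apply]
  | CLI i =>
      rw [hCLI]
      simp [Finsupp.single_apply, Module.Basis.coord_apply]

include hLL hLI hII hCL hCLI in
theorem DGHV2.R4 (b : G) (i : {i : Fin ν // 0 < i.val}) (z : Lg) :
    bas.repr ⁅z, bas (DGHV2Idx.L b)⁆ (DGHV2Idx.CLI i)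
      = -((ε.repr b i.1 : ℤ) : ℂ) * bas.repr z (DGHV2Idx.I (-b)) := by
  refine DGHV2.brExt bas _ _ ((-((ε.repr b i.1 : ℤ) : ℂ)) • bas.coord (DGHV2Idx.I (-b))) (fun J => ?_) z
  cases J with
  | L a =>
      rw [hLL]
      split_ifs with hc <;> simp [Finsupp.single_apply, Module.Basis.coord_apply]
  | I a =>
      rw [← lie_skew, hLI b a]
      split_ifs with hc
      · simp only [map_add, map_neg, map_smul, map_sum, Module.Basis.repr_self, Finsupp.add_apply,
          Finsupp.neg_apply, Finsupp.smul_apply, Finsupp.finset_sum_apply,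
          Finsupp.single_apply, LinearMap.smul_apply, Module.Basis.coord_apply, smul_eq_mul,
          DGHV2Idx.CLI.injEq, DGHV2Idx.I.injEq, eq_neg_iff_add_eq_zero, reduceCtorEq,
          if_false, mul_zero, zero_add, Finset.sum_ite_eq', Finset.mem_univ, if_true,
          mul_one, mul_ite, Subtype.coe_eta]
        rw [add_comm b a] at hc
        simp [hc]
      · simp only [map_add, map_neg, map_smul, Module.Basis.repr_self, Finsupp.add_apply,
          Finsupp.neg_apply, Finsupp.smul_apply, Finsupp.single_apply, LinearMap.smul_apply,
          Module.Basis.coord_apply, smul_eq_mul, DGHV2Idx.I.injEq, eq_neg_iff_add_eq_zero,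
          reduceCtorEq, if_false, mul_zero, add_zero, map_zero, Finsupp.zero_apply]
        rw [add_comm b a] at hc
        simp [hc]
  | CL =>
      rw [hCL]
      simp [Finsupp.single_apply, Module.Basis.coord_apply]
  | CLI j =>
      rw [hCLI]
      simp [Finsupp.single_apply, Module.Basis.coord_apply]

include hLL hLI hII hCL hCLI in
theorem DGHV2.R5 (b v : G) (z : Lg) :
    bas.repr ⁅z, bas (DGHV2Idx.I b)⁆ (DGHV2Idx.L v) = 0 := by
  have h := DGHV2.brExt bas (bas (DGHV2Idx.I b)) (DGHV2Idx.L v) 0 (fun J => ?_) z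
  · simpa using h
  cases J with
  | L a =>
      rw [hLI]
      split_ifs with hc <;> simp [Finsupp.single_apply]
  | I a =>
      rw [hII]; simp
  | CL =>
      rw [hCL]; simp
  | CLI i =>
      rw [hCLI]; simp

include hLL hLI hII hCL hCLI in
theorem DGHV2.R6 (b v : G) (z : Lg) :
    bas.repr ⁅z, bas (DGHV2Idx.I b)⁆ (DGHV2Idx.I v)
      = (2*(v:ℂ) - b) * bas.repr z (DGHV2Idx.L (v-b)) := by
  refine DGHV2.brExt bas _ _ ((2*(v:ℂ)-b) • bas.coord (DGHV2Idx.L (v-b))) (fun J => ?_) z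
  cases J with
  | L a =>
      rw [hLI]
      split_ifs with hc <;>
      · simp only [map_add, map_smul, map_sum, map_zero, Module.Basis.repr_self, Finsupp.add_apply,
          Finsupp.smul_apply, Finsupp.finset_sum_apply, Finsupp.single_apply,
          LinearMap.smul_apply, Module.Basis.coord_apply, smul_eq_mul, DGHV2Idx.I.injEq,
          DGHV2Idx.L.injEq, eq_sub_iff_add_eq, reduceCtorEq, if_false, mul_zero, add_zero,
          Finset.sum_const_zero, Finsupp.zero_apply]
        split_ifs with h
        · obtain rfl := h.symm; push_cast; ring
        · ring
  | I a =>
      rw [hII]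
      simp [Finsupp.single_apply, Module.Basis.coord_apply]
  | CL =>
      rw [hCL]
      simp [Finsupp.single_apply, Module.Basis.coord_apply]
  | CLI i =>
      rw [hCLI]
      simp [Finsupp.single_apply, Module.Basis.coord_apply]

include hLL hLI hII hCL hCLI in
theorem DGHV2.R7 (b : G) (z : Lg) :
    bas.repr ⁅z, bas (DGHV2Idx.I b)⁆ DGHV2Idx.CL = 0 := by
  have h := DGHV2.brExt bas (bas (DGHV2Idx.I b)) DGHV2Idx.CL 0 (fun J => ?_) z
  · simpa using h
  cases J with
  | L a =>
      rw [hLI]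
      split_ifs with hc <;> simp [Finsupp.single_apply]
  | I a =>
      rw [hII]; simp
  | CL =>
      rw [hCL]; simp
  | CLI i =>
      rw [hCLI]; simp

include hLL hLI hII hCL hCLI in
theorem DGHV2.R8 (b : G) (i : {i : Fin ν // 0 < i.val}) (z : Lg) :
    bas.repr ⁅z, bas (DGHV2Idx.I b)⁆ (DGHV2Idx.CLI i)
      = -((ε.repr b i.1 : ℤ) : ℂ) * bas.repr z (DGHV2Idx.L (-b)) := by
  refine DGHV2.brExt bas _ _ ((-((ε.repr b i.1 : ℤ) : ℂ)) • bas.coord (DGHV2Idx.L (-b))) (fun J => ?_) z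
  cases J with
  | L a =>
      rw [hLI]
      split_ifs with hc
      · simp only [map_add, map_smul, map_sum, Module.Basis.repr_self, Finsupp.add_apply,
          Finsupp.smul_apply, Finsupp.finset_sum_apply, Finsupp.single_apply,
          LinearMap.smul_apply, Module.Basis.coord_apply, smul_eq_mul, DGHV2Idx.CLI.injEq,
          DGHV2Idx.L.injEq, eq_neg_iff_add_eq_zero, reduceCtorEq, if_false, mul_zero,
          zero_add, Finset.sum_ite_eq', Finset.mem_univ, if_true, mul_one, mul_ite,
          Subtype.coe_eta]
        have ha : a = -b := eq_neg_of_add_eq_zero_left hc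
        subst ha
        simp [hc, map_neg]
      · simp only [map_add, map_smul, map_zero, Module.Basis.repr_self, Finsupp.add_apply,
          Finsupp.smul_apply, Finsupp.single_apply, LinearMap.smul_apply,
          Module.Basis.coord_apply, smul_eq_mul, DGHV2Idx.L.injEq, eq_neg_iff_add_eq_zero,
          reduceCtorEq, if_false, mul_zero, add_zero, Finsupp.zero_apply]
        simp [hc]
  | I a =>
      rw [hII]
      simp [Finsupp.single_apply, Module.Basis.coord_apply]
  | CL =>
      rw [hCL]
      simp [Finsupp.single_apply, Module.Basis.coord_apply]
  | CLI j =>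
      rw [hCLI]
      simp [Finsupp.single_apply, Module.Basis.coord_apply]

theorem DGHV2.EPhi (φ : Lg →ₗ[ℂ] Lg)
    (hφ : ∀ x y : Lg, φ ⁅x, y⁆ = (1 / 2 : ℂ) • (⁅φ x, y⁆ + ⁅x, φ y⁆))
    (x y : Lg) (M : DGHV2Idx G ν) :
    bas.repr (φ ⁅x, y⁆) M
      = (1/2) * (bas.repr ⁅φ x, y⁆ M - bas.repr ⁅φ y, x⁆ M) := by
  rw [hφ, ← lie_skew x (φ y)]
  simp only [map_smul, map_add, map_neg, Finsupp.smul_apply, Finsupp.add_apply,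
    Finsupp.neg_apply, smul_eq_mul]
  ring

include hLL hLI hII hCL hCLI in
theorem DGHV2.E2L (φ : Lg →ₗ[ℂ] Lg)
    (hφ : ∀ x y : Lg, φ ⁅x, y⁆ = (1 / 2 : ℂ) • (⁅φ x, y⁆ + ⁅x, φ y⁆)) (a b v : G) :
    ((b:ℂ)-a) * bas.repr (φ (bas (DGHV2Idx.L (a+b)))) (DGHV2Idx.L v)
      + (if a+b = 0 then ((a:ℂ)^3-a)/12 else 0) * bas.repr (φ (bas DGHV2Idx.CL)) (DGHV2Idx.L v)
    = (1/2) * ((2*(b:ℂ)-v) * bas.repr (φ (bas (DGHV2Idx.L a))) (DGHV2Idx.L (v-b))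
        - (2*(a:ℂ)-v) * bas.repr (φ (bas (DGHV2Idx.L b))) (DGHV2Idx.L (v-a))) := by
  have h := DGHV2.EPhi bas φ hφ (bas (DGHV2Idx.L a)) (bas (DGHV2Idx.L b)) (DGHV2Idx.L v)
  rw [hLL a b] at h
  rw [DGHV2.R1 bas ε hLL hLI hII hCL hCLI b v (φ (bas (DGHV2Idx.L a))),
      DGHV2.R1 bas ε hLL hLI hII hCL hCLI a v (φ (bas (DGHV2Idx.L b)))] at h
  simp only [map_add, map_smul, Finsupp.add_apply, Finsupp.smul_apply, smul_eq_mul] at h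
  linear_combination h

include hLL hLI hII hCL hCLI in
theorem DGHV2.E2I (φ : Lg →ₗ[ℂ] Lg)
    (hφ : ∀ x y : Lg, φ ⁅x, y⁆ = (1 / 2 : ℂ) • (⁅φ x, y⁆ + ⁅x, φ y⁆)) (a b v : G) :
    ((b:ℂ)-a) * bas.repr (φ (bas (DGHV2Idx.L (a+b)))) (DGHV2Idx.I v)
      + (if a+b = 0 then ((a:ℂ)^3-a)/12 else 0) * bas.repr (φ (bas DGHV2Idx.CL)) (DGHV2Idx.I v)
    = (1/2) * (-((v:ℂ)+b) * bas.repr (φ (bas (DGHV2Idx.L a))) (DGHV2Idx.I (v-b))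
        + ((v:ℂ)+a) * bas.repr (φ (bas (DGHV2Idx.L b))) (DGHV2Idx.I (v-a))) := by
  have h := DGHV2.EPhi bas φ hφ (bas (DGHV2Idx.L a)) (bas (DGHV2Idx.L b)) (DGHV2Idx.I v)
  rw [hLL a b] at h
  rw [DGHV2.R2 bas ε hLL hLI hII hCL hCLI b v (φ (bas (DGHV2Idx.L a))),
      DGHV2.R2 bas ε hLL hLI hII hCL hCLI a v (φ (bas (DGHV2Idx.L b)))] at h
  simp only [map_add, map_smul, Finsupp.add_apply, Finsupp.smul_apply, smul_eq_mul] at h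
  linear_combination h

include hLL hLI hII hCL hCLI in
theorem DGHV2.E2C (φ : Lg →ₗ[ℂ] Lg)
    (hφ : ∀ x y : Lg, φ ⁅x, y⁆ = (1 / 2 : ℂ) • (⁅φ x, y⁆ + ⁅x, φ y⁆)) (a b : G) :
    ((b:ℂ)-a) * bas.repr (φ (bas (DGHV2Idx.L (a+b)))) DGHV2Idx.CL
      + (if a+b = 0 then ((a:ℂ)^3-a)/12 else 0) * bas.repr (φ (bas DGHV2Idx.CL)) DGHV2Idx.CL
    = (1/2) * ((((b:ℂ)-(b:ℂ)^3)/12) * bas.repr (φ (bas (DGHV2Idx.L a))) (DGHV2Idx.L (-b))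
        - (((a:ℂ)-(a:ℂ)^3)/12) * bas.repr (φ (bas (DGHV2Idx.L b))) (DGHV2Idx.L (-a))) := by
  have h := DGHV2.EPhi bas φ hφ (bas (DGHV2Idx.L a)) (bas (DGHV2Idx.L b)) DGHV2Idx.CL
  rw [hLL a b] at h
  rw [DGHV2.R3 bas ε hLL hLI hII hCL hCLI b (φ (bas (DGHV2Idx.L a))),
      DGHV2.R3 bas ε hLL hLI hII hCL hCLI a (φ (bas (DGHV2Idx.L b)))] at h
  simp only [map_add, map_smul, Finsupp.add_apply, Finsupp.smul_apply, smul_eq_mul] at h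
  linear_combination h

include hLL hLI hII hCL hCLI in
theorem DGHV2.E2K (φ : Lg →ₗ[ℂ] Lg)
    (hφ : ∀ x y : Lg, φ ⁅x, y⁆ = (1 / 2 : ℂ) • (⁅φ x, y⁆ + ⁅x, φ y⁆)) (a b : G)
    (i : {i : Fin ν // 0 < i.val}) :
    ((b:ℂ)-a) * bas.repr (φ (bas (DGHV2Idx.L (a+b)))) (DGHV2Idx.CLI i)
      + (if a+b = 0 then ((a:ℂ)^3-a)/12 else 0) * bas.repr (φ (bas DGHV2Idx.CL)) (DGHV2Idx.CLI i)
    = (1/2) * (-((ε.repr b i.1 : ℤ):ℂ) * bas.repr (φ (bas (DGHV2Idx.L a))) (DGHV2Idx.I (-b))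
        + ((ε.repr a i.1 : ℤ):ℂ) * bas.repr (φ (bas (DGHV2Idx.L b))) (DGHV2Idx.I (-a))) := by
  have h := DGHV2.EPhi bas φ hφ (bas (DGHV2Idx.L a)) (bas (DGHV2Idx.L b)) (DGHV2Idx.CLI i)
  rw [hLL a b] at h
  rw [DGHV2.R4 bas ε hLL hLI hII hCL hCLI b i (φ (bas (DGHV2Idx.L a))),
      DGHV2.R4 bas ε hLL hLI hII hCL hCLI a i (φ (bas (DGHV2Idx.L b)))] at h
  simp only [map_add, map_smul, Finsupp.add_apply, Finsupp.smul_apply, smul_eq_mul] at h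
  linear_combination h

include hLL hLI hII hCL hCLI in
theorem DGHV2.E1L (φ : Lg →ₗ[ℂ] Lg)
    (hφ : ∀ x y : Lg, φ ⁅x, y⁆ = (1 / 2 : ℂ) • (⁅φ x, y⁆ + ⁅x, φ y⁆)) (a b v : G) :
    ((b:ℂ)+2*a) * bas.repr (φ (bas (DGHV2Idx.I (a+b)))) (DGHV2Idx.L v)
      + (if a+b = 0 then
          ∑ j : {i : Fin ν // 0 < i.val},
            ((ε.repr a j.1 : ℤ):ℂ) * bas.repr (φ (bas (DGHV2Idx.CLI j))) (DGHV2Idx.L v)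
         else 0)
    = -(1/2) * ((2*(a:ℂ)-v) * bas.repr (φ (bas (DGHV2Idx.I b))) (DGHV2Idx.L (v-a))) := by
  have h := DGHV2.EPhi bas φ hφ (bas (DGHV2Idx.L a)) (bas (DGHV2Idx.I b)) (DGHV2Idx.L v)
  rw [hLI a b] at h
  rw [DGHV2.R5 bas ε hLL hLI hII hCL hCLI b v (φ (bas (DGHV2Idx.L a))),
      DGHV2.R1 bas ε hLL hLI hII hCL hCLI a v (φ (bas (DGHV2Idx.I b)))] at h
  by_cases hc : a + b = 0
  · simp only [hc, if_true, if_pos] at h ⊢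
    simp only [map_add, map_smul, map_sum, Finsupp.add_apply, Finsupp.smul_apply,
      Finsupp.finset_sum_apply, smul_eq_mul] at h
    linear_combination h
  · simp only [hc, if_false, if_neg, not_false_iff] at h ⊢
    simp only [map_add, map_smul, map_zero, Finsupp.add_apply, Finsupp.smul_apply,
      Finsupp.zero_apply, smul_eq_mul] at h
    linear_combination h

include hLL hLI hII hCL hCLI in
theorem DGHV2.E1I (φ : Lg →ₗ[ℂ] Lg)
    (hφ : ∀ x y : Lg, φ ⁅x, y⁆ = (1 / 2 : ℂ) • (⁅φ x, y⁆ + ⁅x, φ y⁆)) (a b v : G) :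
    ((b:ℂ)+2*a) * bas.repr (φ (bas (DGHV2Idx.I (a+b)))) (DGHV2Idx.I v)
      + (if a+b = 0 then
          ∑ j : {i : Fin ν // 0 < i.val},
            ((ε.repr a j.1 : ℤ):ℂ) * bas.repr (φ (bas (DGHV2Idx.CLI j))) (DGHV2Idx.I v)
         else 0)
    = (1/2) * ((2*(v:ℂ)-b) * bas.repr (φ (bas (DGHV2Idx.L a))) (DGHV2Idx.L (v-b))
        + ((v:ℂ)+a) * bas.repr (φ (bas (DGHV2Idx.I b))) (DGHV2Idx.I (v-a))) := by
  have h := DGHV2.EPhi bas φ hφ (bas (DGHV2Idx.L a)) (bas (DGHV2Idx.I b)) (DGHV2Idx.I v)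
  rw [hLI a b] at h
  rw [DGHV2.R6 bas ε hLL hLI hII hCL hCLI b v (φ (bas (DGHV2Idx.L a))),
      DGHV2.R2 bas ε hLL hLI hII hCL hCLI a v (φ (bas (DGHV2Idx.I b)))] at h
  by_cases hc : a + b = 0
  · simp only [hc, if_true, if_pos] at h ⊢
    simp only [map_add, map_smul, map_sum, Finsupp.add_apply, Finsupp.smul_apply,
      Finsupp.finset_sum_apply, smul_eq_mul] at h
    linear_combination h
  · simp only [hc, if_false, if_neg, not_false_iff] at h ⊢
    simp only [map_add, map_smul, map_zero, Finsupp.add_apply, Finsupp.smul_apply,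
      Finsupp.zero_apply, smul_eq_mul] at h
    linear_combination h

include hLL hLI hII hCL hCLI in
theorem DGHV2.E1C (φ : Lg →ₗ[ℂ] Lg)
    (hφ : ∀ x y : Lg, φ ⁅x, y⁆ = (1 / 2 : ℂ) • (⁅φ x, y⁆ + ⁅x, φ y⁆)) (a b : G) :
    ((b:ℂ)+2*a) * bas.repr (φ (bas (DGHV2Idx.I (a+b)))) DGHV2Idx.CL
      + (if a+b = 0 then
          ∑ j : {i : Fin ν // 0 < i.val},
            ((ε.repr a j.1 : ℤ):ℂ) * bas.repr (φ (bas (DGHV2Idx.CLI j))) DGHV2Idx.CL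
         else 0)
    = -(1/2) * ((((a:ℂ)-(a:ℂ)^3)/12) * bas.repr (φ (bas (DGHV2Idx.I b))) (DGHV2Idx.L (-a))) := by
  have h := DGHV2.EPhi bas φ hφ (bas (DGHV2Idx.L a)) (bas (DGHV2Idx.I b)) DGHV2Idx.CL
  rw [hLI a b] at h
  rw [DGHV2.R7 bas ε hLL hLI hII hCL hCLI b (φ (bas (DGHV2Idx.L a))),
      DGHV2.R3 bas ε hLL hLI hII hCL hCLI a (φ (bas (DGHV2Idx.I b)))] at h
  by_cases hc : a + b = 0
  · simp only [hc, if_true, if_pos] at h ⊢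
    simp only [map_add, map_smul, map_sum, Finsupp.add_apply, Finsupp.smul_apply,
      Finsupp.finset_sum_apply, smul_eq_mul] at h
    linear_combination h
  · simp only [hc, if_false, if_neg, not_false_iff] at h ⊢
    simp only [map_add, map_smul, map_zero, Finsupp.add_apply, Finsupp.smul_apply,
      Finsupp.zero_apply, smul_eq_mul] at h
    linear_combination h

include hLL hLI hII hCL hCLI in
theorem DGHV2.E1K (φ : Lg →ₗ[ℂ] Lg)
    (hφ : ∀ x y : Lg, φ ⁅x, y⁆ = (1 / 2 : ℂ) • (⁅φ x, y⁆ + ⁅x, φ y⁆)) (a b : G)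
    (i : {i : Fin ν // 0 < i.val}) :
    ((b:ℂ)+2*a) * bas.repr (φ (bas (DGHV2Idx.I (a+b)))) (DGHV2Idx.CLI i)
      + (if a+b = 0 then
          ∑ j : {i : Fin ν // 0 < i.val},
            ((ε.repr a j.1 : ℤ):ℂ) * bas.repr (φ (bas (DGHV2Idx.CLI j))) (DGHV2Idx.CLI i)
         else 0)
    = (1/2) * (-((ε.repr b i.1 : ℤ):ℂ) * bas.repr (φ (bas (DGHV2Idx.L a))) (DGHV2Idx.L (-b))
        + ((ε.repr a i.1 : ℤ):ℂ) * bas.repr (φ (bas (DGHV2Idx.I b))) (DGHV2Idx.I (-a))) := by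
  have h := DGHV2.EPhi bas φ hφ (bas (DGHV2Idx.L a)) (bas (DGHV2Idx.I b)) (DGHV2Idx.CLI i)
  rw [hLI a b] at h
  rw [DGHV2.R8 bas ε hLL hLI hII hCL hCLI b i (φ (bas (DGHV2Idx.L a))),
      DGHV2.R4 bas ε hLL hLI hII hCL hCLI a i (φ (bas (DGHV2Idx.I b)))] at h
  by_cases hc : a + b = 0
  · simp only [hc, if_true, if_pos] at h ⊢
    simp only [map_add, map_smul, map_sum, Finsupp.add_apply, Finsupp.smul_apply,
      Finsupp.finset_sum_apply, smul_eq_mul] at h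
    linear_combination h
  · simp only [hc, if_false, if_neg, not_false_iff] at h ⊢
    simp only [map_add, map_smul, map_zero, Finsupp.add_apply, Finsupp.smul_apply,
      Finsupp.zero_apply, smul_eq_mul] at h
    linear_combination h

end Aux

/-- every `1/2`-derivation of `g(G, -2)` (with `G` free abelian
of rank `ν ≥ 1`) is a scalar multiple of the identity. -/
theorem halfDerivation_dgHV_neg_two_is_trivial
    (ν : ℕ) (hν : 1 ≤ ν)
    (G : AddSubgroup ℂ) (ε : Module.Basis (Fin ν) ℤ G)
    (Lg : Type*) [LieRing Lg] [LieAlgebra ℂ Lg]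
    (bas : Module.Basis (DGHV2Idx G ν) ℂ Lg)
    (hLL : ∀ a b : G, ⁅bas (DGHV2Idx.L a), bas (DGHV2Idx.L b)⁆ =
      ((b : ℂ) - (a : ℂ)) • bas (DGHV2Idx.L (a + b)) +
        (if a + b = 0 then ((a : ℂ) ^ 3 - (a : ℂ)) / 12 else 0) •
          bas DGHV2Idx.CL)
    (hLI : ∀ a b : G, ⁅bas (DGHV2Idx.L a), bas (DGHV2Idx.I b)⁆ =
      ((b : ℂ) + 2 * (a : ℂ)) • bas (DGHV2Idx.I (a + b)) +
        (if a + b = 0 then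
          ∑ i : {i : Fin ν // 0 < i.val},
            ((ε.repr a i.1 : ℤ) : ℂ) • bas (DGHV2Idx.CLI i)
        else 0))
    (hII : ∀ a b : G, ⁅bas (DGHV2Idx.I a), bas (DGHV2Idx.I b)⁆ = 0)
    (hCL : ∀ x : Lg, ⁅bas DGHV2Idx.CL, x⁆ = 0)
    (hCLI : ∀ (i : {i : Fin ν // 0 < i.val}) (x : Lg),
      ⁅bas (DGHV2Idx.CLI i), x⁆ = 0)
    (φ : Lg →ₗ[ℂ] Lg)
    (hφ : ∀ x y : Lg, φ ⁅x, y⁆ = (1 / 2 : ℂ) • (⁅φ x, y⁆ + ⁅x, φ y⁆)) :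
    ∃ c : ℂ, φ = c • (LinearMap.id : Lg →ₗ[ℂ] Lg) := by
  classical
  -- the first basis vector of `G`
  set e1 : G := ε ⟨0, hν⟩ with he1def
  have he1G : e1 ≠ 0 := ε.ne_zero _
  have he1 : (e1:ℂ) ≠ 0 := fun h => he1G (ZeroMemClass.coe_eq_zero.mp h)
  -- picking an element of `G` avoiding finitely many complex values
  have pick : ∀ v1 v2 : ℂ, ∃ a : G, (a:ℂ) ≠ 0 ∧ (a:ℂ) ≠ v1 ∧ (a:ℂ) ≠ v2 := by
    intro v1 v2
    have c2 : ((e1+e1 : G):ℂ) = 2*(e1:ℂ) := by push_cast; ring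
    have c3 : ((e1+e1+e1 : G):ℂ) = 3*(e1:ℂ) := by push_cast; ring
    by_cases h1 : (e1:ℂ) ≠ v1 ∧ (e1:ℂ) ≠ v2
    · exact ⟨e1, he1, h1.1, h1.2⟩
    by_cases h2 : 2*(e1:ℂ) ≠ v1 ∧ 2*(e1:ℂ) ≠ v2
    · refine ⟨e1+e1, ?_, ?_, ?_⟩ <;> rw [c2]
      · intro h; exact he1 (by linear_combination h/2)
      · exact h2.1
      · exact h2.2
    push_neg at h1 h2
    by_cases h1' : (e1:ℂ) = v1
    · by_cases h2' : 2*(e1:ℂ) = v1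
      · exact absurd (by linear_combination h2' - h1') he1
      · have h2'' := h2 h2'
        refine ⟨e1+e1+e1, ?_, ?_, ?_⟩ <;> rw [c3]
        · intro h; exact he1 (by linear_combination h/3)
        · intro h; exact he1 (by linear_combination (h - h1')/2)
        · intro h; exact he1 (by linear_combination h - h2'')
    · have h1'' := h1 h1'
      by_cases h2' : 2*(e1:ℂ) = v2
      · exact absurd (by linear_combination h2' - h1'') he1
      · have h2'' : 2*(e1:ℂ) = v1 := by
          by_cases hx : 2*(e1:ℂ) = v1
          · exact hx
          · exact absurd (h2 hx) h2'
        refine ⟨e1+e1+e1, ?_, ?_, ?_⟩ <;> rw [c3]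
        · intro h; exact he1 (by linear_combination h/3)
        · intro h; exact he1 (by linear_combination h - h2'')
        · intro h; exact he1 (by linear_combination (h - h1'')/2)
  -- coefficient functions
  obtain ⟨A, hA⟩ : ∃ A : G → G → ℂ, ∀ a v,
      bas.repr (φ (bas (DGHV2Idx.L a))) (DGHV2Idx.L v) = A a v := ⟨_, fun _ _ => rfl⟩
  obtain ⟨B, hB⟩ : ∃ B : G → G → ℂ, ∀ a v,
      bas.repr (φ (bas (DGHV2Idx.L a))) (DGHV2Idx.I v) = B a v := ⟨_, fun _ _ => rfl⟩
  obtain ⟨cc, hcc⟩ : ∃ cc : G → ℂ, ∀ a,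
      bas.repr (φ (bas (DGHV2Idx.L a))) DGHV2Idx.CL = cc a := ⟨_, fun _ => rfl⟩
  obtain ⟨kk, hkk⟩ : ∃ kk : G → {i : Fin ν // 0 < i.val} → ℂ, ∀ a i,
      bas.repr (φ (bas (DGHV2Idx.L a))) (DGHV2Idx.CLI i) = kk a i := ⟨_, fun _ _ => rfl⟩
  obtain ⟨P, hP⟩ : ∃ P : G → G → ℂ, ∀ b v,
      bas.repr (φ (bas (DGHV2Idx.I b))) (DGHV2Idx.L v) = P b v := ⟨_, fun _ _ => rfl⟩
  obtain ⟨Q, hQ⟩ : ∃ Q : G → G → ℂ, ∀ b v,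
      bas.repr (φ (bas (DGHV2Idx.I b))) (DGHV2Idx.I v) = Q b v := ⟨_, fun _ _ => rfl⟩
  obtain ⟨dd, hdd⟩ : ∃ dd : G → ℂ, ∀ b,
      bas.repr (φ (bas (DGHV2Idx.I b))) DGHV2Idx.CL = dd b := ⟨_, fun _ => rfl⟩
  obtain ⟨ll, hll⟩ : ∃ ll : G → {i : Fin ν // 0 < i.val} → ℂ, ∀ b i,
      bas.repr (φ (bas (DGHV2Idx.I b))) (DGHV2Idx.CLI i) = ll b i := ⟨_, fun _ _ => rfl⟩
  obtain ⟨γ, hγdef⟩ : ∃ γ : ℂ,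
      bas.repr (φ (bas DGHV2Idx.CL)) DGHV2Idx.CL = γ := ⟨_, rfl⟩
  obtain ⟨γK, hγK⟩ : ∃ γK : {i : Fin ν // 0 < i.val} → ℂ, ∀ i,
      bas.repr (φ (bas DGHV2Idx.CL)) (DGHV2Idx.CLI i) = γK i := ⟨_, fun _ => rfl⟩
  obtain ⟨m, hm⟩ : ∃ m : {i : Fin ν // 0 < i.val} → ℂ, ∀ j,
      bas.repr (φ (bas (DGHV2Idx.CLI j))) DGHV2Idx.CL = m j := ⟨_, fun _ => rfl⟩
  obtain ⟨mm, hmm⟩ : ∃ mm : {i : Fin ν // 0 < i.val} → {i : Fin ν // 0 < i.val} → ℂ, ∀ j i,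
      bas.repr (φ (bas (DGHV2Idx.CLI j))) (DGHV2Idx.CLI i) = mm j i := ⟨_, fun _ _ => rfl⟩
  -- centrality of images of central elements
  have central : ∀ z : Lg, (∀ y : Lg, ⁅z, y⁆ = 0) →
      (∀ v : G, bas.repr z (DGHV2Idx.L v) = 0) ∧
      (∀ v : G, bas.repr z (DGHV2Idx.I v) = 0) := by
    intro z hz
    constructor
    · intro v
      by_cases hv : v = 0
      · subst hv
        have h := DGHV2.R1 bas ε hLL hLI hII hCL hCLI e1 e1 z
        rw [hz] at h
        simp only [map_zero, Finsupp.zero_apply, sub_self] at h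
        have h2 : (2*(e1:ℂ) - e1) = (e1:ℂ) := by ring
        rw [h2] at h
        exact ((mul_eq_zero.mp h.symm).resolve_left he1)
      · have h := DGHV2.R1 bas ε hLL hLI hII hCL hCLI 0 v z
        rw [hz] at h
        simp only [map_zero, Finsupp.zero_apply, sub_zero] at h
        have h2 : (2*((0:G):ℂ) - v) = -(v:ℂ) := by push_cast; ring
        rw [h2] at h
        refine ((mul_eq_zero.mp h.symm).resolve_left ?_)
        simpa using fun hh => hv (ZeroMemClass.coe_eq_zero.mp hh)
    · intro v
      by_cases hv : v = 0
      · subst hv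
        have h := DGHV2.R2 bas ε hLL hLI hII hCL hCLI e1 e1 z
        rw [hz] at h
        simp only [map_zero, Finsupp.zero_apply, sub_self] at h
        have h2 : (-((e1:ℂ) + e1)) ≠ 0 := by
          intro hh; exact he1 (by linear_combination -hh/2)
        exact ((mul_eq_zero.mp h.symm).resolve_left h2)
      · have h := DGHV2.R2 bas ε hLL hLI hII hCL hCLI 0 v z
        rw [hz] at h
        simp only [map_zero, Finsupp.zero_apply, sub_zero] at h
        have h2 : (-((v:ℂ) + ((0:G):ℂ))) ≠ 0 := by
          push_cast
          simpa using fun hh => hv (ZeroMemClass.coe_eq_zero.mp hh)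
        exact ((mul_eq_zero.mp h.symm).resolve_left h2)
  have hφC : ∀ y : Lg, ⁅φ (bas DGHV2Idx.CL), y⁆ = 0 := by
    intro y
    have h := hφ (bas DGHV2Idx.CL) y
    rw [hCL y, hCL (φ y), map_zero, add_zero] at h
    rcases smul_eq_zero.mp h.symm with h'|h'
    · norm_num at h'
    · exact h'
  have hφK : ∀ (j : {i : Fin ν // 0 < i.val}) (y : Lg),
      ⁅φ (bas (DGHV2Idx.CLI j)), y⁆ = 0 := by
    intro j y
    have h := hφ (bas (DGHV2Idx.CLI j)) y
    rw [hCLI j y, hCLI j (φ y), map_zero, add_zero] at h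
    rcases smul_eq_zero.mp h.symm with h'|h'
    · norm_num at h'
    · exact h'
  have hCLL : ∀ v : G, bas.repr (φ (bas DGHV2Idx.CL)) (DGHV2Idx.L v) = 0 :=
    (central _ hφC).1
  have hCLI2 : ∀ v : G, bas.repr (φ (bas DGHV2Idx.CL)) (DGHV2Idx.I v) = 0 :=
    (central _ hφC).2
  have hKL : ∀ j (v : G), bas.repr (φ (bas (DGHV2Idx.CLI j))) (DGHV2Idx.L v) = 0 :=
    fun j => (central _ (hφK j)).1
  have hKI : ∀ j (v : G), bas.repr (φ (bas (DGHV2Idx.CLI j))) (DGHV2Idx.I v) = 0 :=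
    fun j => (central _ (hφK j)).2
  -- cleaned componentwise equations
  have E2L' : ∀ a b v : G, ((b:ℂ)-a) * A (a+b) v
      = (1/2) * ((2*(b:ℂ)-v) * A a (v-b) - (2*(a:ℂ)-v) * A b (v-a)) := by
    intro a b v
    have h := DGHV2.E2L bas ε hLL hLI hII hCL hCLI φ hφ a b v
    rw [hCLL v] at h
    simp only [hA, mul_zero, add_zero] at h
    exact h
  have E2I' : ∀ a b v : G, ((b:ℂ)-a) * B (a+b) v
      = (1/2) * (-((v:ℂ)+b) * B a (v-b) + ((v:ℂ)+a) * B b (v-a)) := by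
    intro a b v
    have h := DGHV2.E2I bas ε hLL hLI hII hCL hCLI φ hφ a b v
    rw [hCLI2 v] at h
    simp only [hB, mul_zero, add_zero] at h
    exact h
  have E2C' : ∀ a b : G, ((b:ℂ)-a) * cc (a+b)
        + (if a+b = 0 then ((a:ℂ)^3-a)/12 else 0) * γ
      = (1/2) * ((((b:ℂ)-(b:ℂ)^3)/12) * A a (-b) - (((a:ℂ)-(a:ℂ)^3)/12) * A b (-a)) := by
    intro a b
    have h := DGHV2.E2C bas ε hLL hLI hII hCL hCLI φ hφ a b
    simp only [hA, hcc, hγdef] at h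
    exact h
  have E2K' : ∀ (a b : G) i, ((b:ℂ)-a) * kk (a+b) i
        + (if a+b = 0 then ((a:ℂ)^3-a)/12 else 0) * γK i
      = (1/2) * (-((ε.repr b i.1 : ℤ):ℂ) * B a (-b) + ((ε.repr a i.1 : ℤ):ℂ) * B b (-a)) := by
    intro a b i
    have h := DGHV2.E2K bas ε hLL hLI hII hCL hCLI φ hφ a b i
    simp only [hB, hkk, hγK] at h
    exact h
  have E1L' : ∀ a b v : G, ((b:ℂ)+2*a) * P (a+b) v
      = -(1/2) * ((2*(a:ℂ)-v) * P b (v-a)) := by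
    intro a b v
    have h := DGHV2.E1L bas ε hLL hLI hII hCL hCLI φ hφ a b v
    simp only [hP, hKL, mul_zero, Finset.sum_const_zero, ite_self, add_zero] at h
    exact h
  have E1I' : ∀ a b v : G, ((b:ℂ)+2*a) * Q (a+b) v
      = (1/2) * ((2*(v:ℂ)-b) * A a (v-b) + ((v:ℂ)+a) * Q b (v-a)) := by
    intro a b v
    have h := DGHV2.E1I bas ε hLL hLI hII hCL hCLI φ hφ a b v
    simp only [hQ, hA, hKI, mul_zero, Finset.sum_const_zero, ite_self, add_zero] at h
    exact h
  have E1C' : ∀ a b : G, ((b:ℂ)+2*a) * dd (a+b)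
        + (if a+b = 0 then ∑ j : {i : Fin ν // 0 < i.val},
            ((ε.repr a j.1 : ℤ):ℂ) * m j else 0)
      = -(1/2) * ((((a:ℂ)-(a:ℂ)^3)/12) * P b (-a)) := by
    intro a b
    have h := DGHV2.E1C bas ε hLL hLI hII hCL hCLI φ hφ a b
    simp only [hP, hdd, hm] at h
    exact h
  have E1K' : ∀ (a b : G) i, ((b:ℂ)+2*a) * ll (a+b) i
        + (if a+b = 0 then ∑ j : {i : Fin ν // 0 < i.val},
            ((ε.repr a j.1 : ℤ):ℂ) * mm j i else 0)
      = (1/2) * (-((ε.repr b i.1 : ℤ):ℂ) * A a (-b) + ((ε.repr a i.1 : ℤ):ℂ) * Q b (-a)) := by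
    intro a b i
    have h := DGHV2.E1K bas ε hLL hLI hII hCL hCLI φ hφ a b i
    simp only [hA, hQ, hll, hmm] at h
    exact h
  have cne : ∀ w : G, w ≠ 0 → (w:ℂ) ≠ 0 := fun w hw h => hw (ZeroMemClass.coe_eq_zero.mp h)
  -- Stage P : P ≡ 0
  have basePL : ∀ b v : G, (2*(b:ℂ)-v) * P b v = 0 := by
    intro b v
    have h := E1L' 0 b v
    rw [zero_add, sub_zero] at h
    push_cast at h
    linear_combination 2*h
  have hPf : ∀ b v : G, P b v = 0 := by
    intro b v
    by_cases h2 : (v:ℂ) = 2*b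
    · obtain ⟨a, ha0, ha2b, -⟩ := pick (2*(b:ℂ)) (2*(b:ℂ))
      have hz : P (a+b) (v+a) = 0 := by
        have hb := basePL (a+b) (v+a)
        refine (mul_eq_zero.mp hb).resolve_left ?_
        push_cast
        intro hh
        exact ha0 (by linear_combination hh + h2)
      have h := E1L' a b (v+a)
      rw [add_sub_cancel_right] at h
      rw [hz, mul_zero] at h
      have h3 := h.symm
      rcases mul_eq_zero.mp h3 with h4|h4
      · norm_num at h4
      · refine (mul_eq_zero.mp h4).resolve_left ?_
        push_cast
        intro hh
        exact ha2b (by linear_combination hh + h2)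
    · refine (mul_eq_zero.mp (basePL b v)).resolve_left ?_
      intro hh
      exact h2 (by linear_combination -hh)
  -- Stage A
  have hA0 : ∀ w : G, w ≠ 0 → A 0 w = 0 := by
    intro w hw
    have h := E1I' 0 w (w+w)
    rw [zero_add, add_sub_cancel_right, sub_zero] at h
    push_cast at h
    have h3 : (3*(w:ℂ)) * A 0 w = 0 := by linear_combination (-2)*h
    exact (mul_eq_zero.mp h3).resolve_left (fun hh => (cne w hw) (by linear_combination hh/3))
  have hAoff : ∀ b v : G, v ≠ b + b → A b v = (if v = b then A 0 0 else 0) := by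
    intro b v hvb
    have h := E2L' 0 b v
    rw [zero_add, sub_zero] at h
    by_cases hv : v = b
    · subst hv
      rw [if_pos rfl]
      rw [sub_self] at h
      push_cast at h
      have hb : v ≠ 0 := fun h0 => hvb (by rw [h0]; simp)
      have h3 : (v:ℂ) * (A v v - A 0 0) = 0 := by linear_combination 2*h
      have h4 := (mul_eq_zero.mp h3).resolve_left (cne v hb)
      linear_combination h4
    · rw [if_neg hv]
      have hz : A 0 (v-b) = 0 := hA0 _ (fun h0 => hv (sub_eq_zero.mp h0))
      rw [hz] at h
      push_cast at h
      have h3 : (2*(b:ℂ)-v) * A b v = 0 := by linear_combination 2*h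
      refine (mul_eq_zero.mp h3).resolve_left ?_
      intro hh
      exact hvb (Subtype.ext (by push_cast; linear_combination -hh))
  have hAdouble : ∀ c : G, c ≠ 0 → A c (c+c) = 0 := by
    intro c hc
    obtain ⟨a, ha0, hac, hac2⟩ := pick (c:ℂ) ((c:ℂ)/2)
    have h := E2L' a (c-a) (c+c)
    have i0 : a + (c-a) = c := by abel
    have i1 : (c+c) - (c-a) = c + a := by abel
    have i2 : (c+c) - a = c + (c-a) := by abel
    rw [i0, i1, i2] at h
    have z1 : A a (c+a) = 0 := by
      rw [hAoff a (c+a) (fun hh => hac (congrArg Subtype.val (add_right_cancel hh)).symm),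
        if_neg (fun hh => hc (add_eq_right.mp hh))]
    have z2 : A (c-a) (c+(c-a)) = 0 := by
      refine Eq.trans (hAoff (c-a) _ (fun hh => ?_)) (if_neg (fun hh => hc (add_eq_right.mp hh)))
      have h5 : c = c - a := add_right_cancel hh
      have h6 : a = 0 := sub_eq_self.mp h5.symm
      exact ha0 (by rw [h6]; simp)
    rw [z1, z2] at h
    have key : (((c-a:G):ℂ) - a) * A c (c+c) = 0 := by linear_combination h
    refine (mul_eq_zero.mp key).resolve_left ?_
    push_cast
    intro hh
    exact hac2 (by linear_combination -hh/2)
  have hAf : ∀ b v : G, A b v = if v = b then A 0 0 else 0 := by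
    intro b v
    by_cases hd : v = b + b
    · by_cases hb : b = 0
      · subst hb
        have hv0 : v = 0 := by simpa using hd
        subst hv0
        simp
      · rw [hd, hAdouble b hb, if_neg (fun hh => hb (add_eq_right.mp hh))]
    · exact hAoff b v hd
  -- Stage Q
  have baseQ : ∀ b v : G, (2*(b:ℂ)-v) * Q b v = (2*(v:ℂ)-b) * A 0 (v-b) := by
    intro b v
    have h := E1I' 0 b v
    rw [zero_add, sub_zero] at h
    push_cast at h
    linear_combination 2*h
  have hQdiagne : ∀ b : G, b ≠ 0 → Q b b = A 0 0 := by
    intro b hb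
    have h := baseQ b b
    rw [sub_self] at h
    have hfac : 2*(b:ℂ)-b ≠ 0 := fun hh => (cne b hb) (by linear_combination hh)
    have h2 : A 0 (0:G) = A 0 0 := rfl
    rw [h2] at h
    exact mul_left_cancel₀ hfac (by linear_combination h)
  have hQoff : ∀ b v : G, v ≠ b → v ≠ b + b → Q b v = 0 := by
    intro b v h1 h2
    have h := baseQ b v
    rw [hA0 (v-b) (sub_ne_zero.mpr h1), mul_zero] at h
    refine (mul_eq_zero.mp h).resolve_left ?_
    intro hh
    exact h2 (Subtype.ext (by push_cast; linear_combination -hh))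
  have hQ00 : Q 0 0 = A 0 0 := by
    have h := E1I' e1 (-e1) 0
    have i0 : e1 + -e1 = 0 := by simp
    have i1 : (0:G) - -e1 = e1 := by simp
    have i2 : (0:G) - e1 = -e1 := by simp
    rw [i0, i1, i2] at h
    rw [hAf e1 e1, if_pos rfl] at h
    rw [hQdiagne (-e1) (neg_ne_zero.mpr he1G)] at h
    push_cast at h
    have h3 : (e1:ℂ) * (Q 0 0 - A 0 0) = 0 := by linear_combination h
    have h4 := (mul_eq_zero.mp h3).resolve_left he1
    linear_combination h4
  have hQdouble : ∀ c : G, c ≠ 0 → Q c (c+c) = 0 := by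
    intro c hc
    obtain ⟨a, ha0, hac, hanc⟩ := pick (c:ℂ) (-(c:ℂ))
    have h := E1I' a (c-a) (c+c)
    have i0 : a + (c-a) = c := by abel
    have i1 : (c+c) - (c-a) = c + a := by abel
    have i2 : (c+c) - a = c + (c-a) := by abel
    rw [i0, i1, i2] at h
    have z1 : A a (c+a) = 0 := by
      rw [hAf, if_neg (fun hh => hc (add_eq_right.mp hh))]
    have z2 : Q (c-a) (c+(c-a)) = 0 := by
      refine hQoff _ _ (fun hh => hc (add_eq_right.mp hh)) (fun hh => ?_)
      have h5 : c = c - a := add_right_cancel hh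
      have h6 : a = 0 := sub_eq_self.mp h5.symm
      exact ha0 (by rw [h6]; simp)
    rw [z1, z2] at h
    have key : (((c-a:G):ℂ) + 2*a) * Q c (c+c) = 0 := by linear_combination h
    refine (mul_eq_zero.mp key).resolve_left ?_
    push_cast
    intro hh
    exact hanc (by linear_combination hh)
  have hQf : ∀ b v : G, Q b v = if v = b then A 0 0 else 0 := by
    intro b v
    by_cases h1 : v = b
    · subst h1
      rw [if_pos rfl]
      by_cases hb : v = 0
      · subst hb; exact hQ00
      · exact hQdiagne v hb
    · rw [if_neg h1]
      by_cases h2 : v = b + b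
      · have hb : b ≠ 0 := fun h0 => h1 (by rw [h2, h0]; simp)
        rw [h2]; exact hQdouble b hb
      · exact hQoff b v h1 h2
  -- Stage B
  have baseB : ∀ b v : G, (2*(b:ℂ)-v) * B b v = -((v:ℂ)+b) * B 0 (v-b) := by
    intro b v
    have h := E2I' 0 b v
    rw [zero_add, sub_zero] at h
    push_cast at h
    linear_combination 2*h
  have hB0off : ∀ w : G, w ≠ 0 → B 0 w = 0 := by
    intro w hw
    have h := baseB w (w+w)
    rw [add_sub_cancel_right] at h
    push_cast at h
    have h3 : (3*(w:ℂ)) * B 0 w = 0 := by linear_combination h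
    exact (mul_eq_zero.mp h3).resolve_left (fun hh => (cne w hw) (by linear_combination hh/3))
  have hBdiagval : ∀ b : G, b ≠ 0 → B b b = -2 * B 0 0 := by
    intro b hb
    have h := baseB b b
    rw [sub_self] at h
    have h2 : B 0 (0:G) = B 0 0 := rfl
    rw [h2] at h
    push_cast at h
    have h3 : (b:ℂ) * (B b b + 2*B 0 0) = 0 := by linear_combination h
    have h4 := (mul_eq_zero.mp h3).resolve_left (cne b hb)
    linear_combination h4
  have hBoff : ∀ b v : G, v ≠ b → v ≠ b + b → B b v = 0 := by
    intro b v h1 h2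
    have h := baseB b v
    rw [hB0off (v-b) (sub_ne_zero.mpr h1)] at h
    rw [mul_zero] at h
    refine (mul_eq_zero.mp h).resolve_left ?_
    intro hh
    exact h2 (Subtype.ext (by push_cast; linear_combination -hh))
  have hBdouble : ∀ c : G, c ≠ 0 → B c (c+c) = 0 := by
    intro c hc
    obtain ⟨a, ha0, hac, hac2⟩ := pick (c:ℂ) ((c:ℂ)/2)
    have h := E2I' a (c-a) (c+c)
    have i0 : a + (c-a) = c := by abel
    have i1 : (c+c) - (c-a) = c + a := by abel
    have i2 : (c+c) - a = c + (c-a) := by abel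
    rw [i0, i1, i2] at h
    have z1 : B a (c+a) = 0 :=
      hBoff a (c+a) (fun hh => hc (add_eq_right.mp hh))
        (fun hh => hac (congrArg Subtype.val (add_right_cancel hh)).symm)
    have z2 : B (c-a) (c+(c-a)) = 0 := by
      refine hBoff _ _ (fun hh => hc (add_eq_right.mp hh)) (fun hh => ?_)
      have h5 : c = c - a := add_right_cancel hh
      have h6 : a = 0 := sub_eq_self.mp h5.symm
      exact ha0 (by rw [h6]; simp)
    rw [z1, z2] at h
    have key : (((c-a:G):ℂ) - a) * B c (c+c) = 0 := by linear_combination h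
    refine (mul_eq_zero.mp key).resolve_left ?_
    push_cast
    intro hh
    exact hac2 (by linear_combination -hh/2)
  have hB00 : B 0 0 = 0 := by
    have h2e : e1+e1 ≠ 0 := fun hh => he1 (by
      have := congrArg (Subtype.val) hh
      push_cast at this
      linear_combination this/2)
    have h3e : e1+e1+e1 ≠ 0 := fun hh => he1 (by
      have := congrArg (Subtype.val) hh
      push_cast at this
      linear_combination this/3)
    have h := E2I' e1 (e1+e1) (e1+e1+e1)
    have i0 : e1 + (e1+e1) = e1+e1+e1 := by abel
    have i1 : (e1+e1+e1) - (e1+e1) = e1 := by abel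
    have i2 : (e1+e1+e1) - e1 = e1+e1 := by abel
    rw [i0, i1, i2] at h
    rw [hBdiagval e1 he1G, hBdiagval (e1+e1) h2e, hBdiagval (e1+e1+e1) h3e] at h
    push_cast at h
    have h3 : (3*(e1:ℂ)) * B 0 0 = 0 := by linear_combination -h
    exact (mul_eq_zero.mp h3).resolve_left (fun hh => he1 (by linear_combination hh/3))
  have hBf : ∀ b v : G, B b v = 0 := by
    intro b v
    by_cases h1 : v = b
    · subst h1
      by_cases hb : v = 0
      · subst hb; exact hB00
      · rw [hBdiagval v hb, hB00]; ring
    · by_cases h2 : v = b + b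
      · have hb : b ≠ 0 := fun h0 => h1 (by rw [h2, h0]; simp)
        rw [h2]; exact hBdouble b hb
      · exact hBoff b v h1 h2
  -- central coefficients of φ(L a)
  have hccoff : ∀ w : G, w ≠ 0 → cc w = 0 := by
    intro w hw
    have h := E2C' 0 w
    rw [zero_add, if_neg hw] at h
    rw [hAf 0 (-w), if_neg (fun hh => hw (neg_eq_zero.mp hh))] at h
    push_cast at h
    have h3 : (w:ℂ) * cc w = 0 := by linear_combination h
    exact (mul_eq_zero.mp h3).resolve_left (cne w hw)
  have key2 : ∀ a : G, (-2*(a:ℂ))*cc 0 + (((a:ℂ)^3-a)/12)*(γ - A 0 0) = 0 := by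
    intro a
    have h := E2C' a (-a)
    have i0 : a + -a = 0 := by simp
    rw [i0, if_pos rfl, neg_neg] at h
    rw [hAf a a, if_pos rfl] at h
    rw [hAf (-a) (-a), if_pos rfl] at h
    push_cast at h
    linear_combination h
  have hγf : γ = A 0 0 := by
    have h1 := key2 e1
    have h2 := key2 (e1+e1)
    push_cast at h2
    have h3 : ((e1:ℂ))^3 * (γ - A 0 0) = 0 := by linear_combination (-4)*h1 + 2*h2
    have h4 := (mul_eq_zero.mp h3).resolve_left (pow_ne_zero 3 he1)
    linear_combination h4
  have hcc0 : cc 0 = 0 := by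
    have h1 := key2 e1
    rw [hγf, sub_self, mul_zero, add_zero] at h1
    exact (mul_eq_zero.mp h1).resolve_left (by intro hh; exact he1 (by linear_combination -hh/2))
  have hccf : ∀ a : G, cc a = 0 := by
    intro a
    by_cases ha : a = 0
    · rw [ha]; exact hcc0
    · exact hccoff a ha
  have hkkoff : ∀ (w : G) i, w ≠ 0 → kk w i = 0 := by
    intro w i hw
    have h := E2K' 0 w i
    rw [zero_add, if_neg hw] at h
    simp only [hBf] at h
    push_cast at h
    have h3 : (w:ℂ) * kk w i = 0 := by linear_combination h
    exact (mul_eq_zero.mp h3).resolve_left (cne w hw)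
  have key2K : ∀ (a : G) i, (-2*(a:ℂ))*kk 0 i + (((a:ℂ)^3-a)/12)*(γK i) = 0 := by
    intro a i
    have h := E2K' a (-a) i
    have i0 : a + -a = 0 := by simp
    rw [i0, if_pos rfl] at h
    simp only [hBf] at h
    push_cast at h
    linear_combination h
  have hγKf : ∀ i, γK i = 0 := by
    intro i
    have h1 := key2K e1 i
    have h2 := key2K (e1+e1) i
    push_cast at h2
    have h3 : ((e1:ℂ))^3 * γK i = 0 := by linear_combination (-4)*h1 + 2*h2
    exact (mul_eq_zero.mp h3).resolve_left (pow_ne_zero 3 he1)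
  have hkk0 : ∀ i, kk 0 i = 0 := by
    intro i
    have h1 := key2K e1 i
    rw [hγKf i, mul_zero, add_zero] at h1
    exact (mul_eq_zero.mp h1).resolve_left (by intro hh; exact he1 (by linear_combination -hh/2))
  have hkkf : ∀ (a:G) i, kk a i = 0 := by
    intro a i
    by_cases ha : a = 0
    · rw [ha]; exact hkk0 i
    · exact hkkoff a i ha
  -- dd and m
  have hddoff : ∀ w : G, w ≠ 0 → dd w = 0 := by
    intro w hw
    have h := E1C' 0 w
    rw [zero_add, if_neg hw] at h
    simp only [hPf] at h
    push_cast at h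
    have h3 : (w:ℂ) * dd w = 0 := by linear_combination h
    exact (mul_eq_zero.mp h3).resolve_left (cne w hw)
  have keyD : ∀ a : G, (a:ℂ) * dd 0
      + (∑ j : {i : Fin ν // 0 < i.val}, ((ε.repr a j.1 : ℤ):ℂ) * m j) = 0 := by
    intro a
    have h := E1C' a (-a)
    have i0 : a + -a = 0 := by simp
    rw [i0, if_pos rfl] at h
    simp only [hPf] at h
    push_cast at h
    linear_combination h
  have hre1 : ∀ j : {i : Fin ν // 0 < i.val}, ((ε.repr e1 j.1 : ℤ):ℂ) = 0 := by
    intro j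
    rw [he1def, Module.Basis.repr_self, Finsupp.single_apply, if_neg]
    · simp
    · intro hh
      exact j.2.ne' (congrArg Fin.val hh).symm
  have hdd0 : dd 0 = 0 := by
    have h := keyD e1
    rw [Finset.sum_eq_zero (fun j _ => by rw [hre1 j, zero_mul]), add_zero] at h
    exact (mul_eq_zero.mp h).resolve_left he1
  have hsumeval : ∀ (j0 : {i : Fin ν // 0 < i.val}) (f : {i : Fin ν // 0 < i.val} → ℂ),
      (∑ j : {i : Fin ν // 0 < i.val}, ((ε.repr (ε j0.1) j.1 : ℤ):ℂ) * f j) = f j0 := by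
    intro j0 f
    rw [Module.Basis.repr_self]
    have step : ∀ j : {i : Fin ν // 0 < i.val},
        ((Finsupp.single j0.1 (1:ℤ) j.1 : ℤ):ℂ) * f j = if j0 = j then f j else 0 := by
      intro j
      rw [Finsupp.single_apply]
      by_cases hj : j0 = j
      · subst hj; simp
      · rw [if_neg (fun hh => hj (Subtype.ext hh)), if_neg hj]; simp
    rw [Finset.sum_congr rfl (fun j _ => step j)]
    simp
  have hmf : ∀ j0, m j0 = 0 := by
    intro j0
    have h := keyD (ε j0.1)
    rw [hdd0, mul_zero, zero_add, hsumeval j0 m] at h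
    exact h
  have hddf : ∀ b : G, dd b = 0 := by
    intro b
    by_cases hb : b = 0
    · rw [hb]; exact hdd0
    · exact hddoff b hb
  -- ll and mm
  have hlloff : ∀ (w : G) i, w ≠ 0 → ll w i = 0 := by
    intro w i hw
    have h := E1K' 0 w i
    rw [zero_add, if_neg hw] at h
    rw [hAf 0 (-w), if_neg (fun hh => hw (neg_eq_zero.mp hh))] at h
    simp only [map_zero, Finsupp.zero_apply, Int.cast_zero] at h
    push_cast at h
    have h3 : (w:ℂ) * ll w i = 0 := by linear_combination h
    exact (mul_eq_zero.mp h3).resolve_left (cne w hw)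
  have keyL : ∀ (a : G) i, (a:ℂ) * ll 0 i
      + (∑ j : {i : Fin ν // 0 < i.val}, ((ε.repr a j.1 : ℤ):ℂ) * mm j i)
      = ((ε.repr a i.1 : ℤ):ℂ) * A 0 0 := by
    intro a i
    have h := E1K' a (-a) i
    have i0 : a + -a = 0 := by simp
    rw [i0, if_pos rfl, neg_neg] at h
    rw [hAf a a, if_pos rfl] at h
    rw [hQf (-a) (-a), if_pos rfl] at h
    rw [show ((ε.repr (-a) i.1 : ℤ):ℂ) = -((ε.repr a i.1 : ℤ):ℂ) from by
      rw [map_neg]; push_cast [Finsupp.neg_apply]; ring] at h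
    push_cast at h
    linear_combination h
  have hll0 : ∀ i, ll 0 i = 0 := by
    intro i
    have h := keyL e1 i
    rw [hre1 i, zero_mul] at h
    rw [Finset.sum_eq_zero (fun j _ => by rw [hre1 j, zero_mul]), add_zero] at h
    exact (mul_eq_zero.mp h).resolve_left he1
  have hllf : ∀ (b : G) i, ll b i = 0 := by
    intro b i
    by_cases hb : b = 0
    · rw [hb]; exact hll0 i
    · exact hlloff b i hb
  have hmmf : ∀ j0 i, mm j0 i = if j0 = i then A 0 0 else 0 := by
    intro j0 i
    have h := keyL (ε j0.1) i
    rw [hll0 i, mul_zero, zero_add, hsumeval j0 (fun j => mm j i)] at h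
    have hrhs : ((ε.repr (ε j0.1) i.1 : ℤ):ℂ) = if j0 = i then 1 else 0 := by
      rw [Module.Basis.repr_self, Finsupp.single_apply]
      by_cases hj : j0 = i
      · subst hj; simp
      · rw [if_neg (fun hh => hj (Subtype.ext hh)), if_neg hj]; simp
    rw [hrhs] at h
    rw [h]
    by_cases hj : j0 = i <;> simp [hj]
  -- assembly
  refine ⟨A 0 0, ?_⟩
  apply Module.Basis.ext bas
  intro J
  simp only [LinearMap.smul_apply, LinearMap.id_coe, id_eq]
  refine bas.repr.injective ?_
  ext M
  rw [map_smul, Module.Basis.repr_self]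
  simp only [Finsupp.smul_apply, Finsupp.single_apply, smul_eq_mul]
  cases J with
  | L a =>
      cases M with
      | L v =>
          rw [hA, hAf]
          by_cases h : v = a
          · subst h; simp
          · rw [if_neg h, if_neg (fun hh => h (by injection hh with h'; exact h'.symm)), mul_zero]
      | I v => rw [hB, hBf]; simp
      | CL => rw [hcc, hccf]; simp
      | CLI i => rw [hkk, hkkf]; simp
  | I b =>
      cases M with
      | L v => rw [hP, hPf]; simp
      | I v =>
          rw [hQ, hQf]
          by_cases h : v = b
          · subst h; simp
          · rw [if_neg h, if_neg (fun hh => h (by injection hh with h'; exact h'.symm)), mul_zero]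
      | CL => rw [hdd, hddf]; simp
      | CLI i => rw [hll, hllf]; simp
  | CL =>
      cases M with
      | L v => rw [hCLL]; simp
      | I v => rw [hCLI2]; simp
      | CL => rw [hγdef, hγf]; simp
      | CLI i => rw [hγK, hγKf]; simp
  | CLI j =>
      cases M with
      | L v => rw [hKL]; simp
      | I v => rw [hKI]; simp
      | CL => rw [hm, hmf]; simp
      | CLI i =>
          rw [hmm, hmmf]
          by_cases h : j = i
          · subst h; simp
          · rw [if_neg h, if_neg (fun hh => h (by injection hh)), mul_zero]
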